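/- Let q and u be positive integers, let B ∈ Γ^u_u be a unimodular binarization polytope, and let C ∈ Γ^q_u be any binarization polytope. Then there exists an integral affine transformation g : ℝ^{1+u} → ℝ^{1+q} of the form g(x,z) = (x, f(z)), with f : ℝ^u → ℝ^q integral affine, such that g(B) ⊆ C. -/
import Mathlib


open Set

/-- A rational polytope in `ℝ × ℝ^q`: the convex hull of finitely many rational points. -/
def IsRatPolytopeBin (q : ℕ) (B : Set (ℝ × (Fin q → ℝ))) : Prop :=
  ∃ V : Finset (ℝ × (Fin q → ℝ)),
    (∀ p ∈ V, (∃ r : ℚ, p.1 = (r : ℝ)) ∧ ∀ j, ∃ r : ℚ, p.2 j = (r : ℝ)) ∧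
    B = convexHull ℝ (V : Set (ℝ × (Fin q → ℝ)))

/-- `B ∈ Γ^q_u`: a binarization polytope for a variable `x ∈ {0,…,u}` using `q` binary
variables: a rational polytope contained in `[0,u] × [0,1]^q` whose set of 0-1 points
projects (in the `x` coordinate) exactly onto `{0,1,…,u}`. -/
def IsBinPoly (u q : ℕ) (B : Set (ℝ × (Fin q → ℝ))) : Prop :=
  IsRatPolytopeBin q B ∧
  (∀ p ∈ B, 0 ≤ p.1 ∧ p.1 ≤ (u : ℝ) ∧ ∀ j, 0 ≤ p.2 j ∧ p.2 j ≤ 1) ∧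
  Prod.fst '' (B ∩ {p | ∀ j, p.2 j = 0 ∨ p.2 j = 1}) = {x : ℝ | ∃ k : ℕ, k ≤ u ∧ x = (k : ℝ)}

/-- A unimodular binarization polytope `B ∈ Γ^u_u`: a perfect binarization polytope
`B = conv{(j, w^j) : j = 0,…,u}` with `w^j ∈ {0,1}^u` such that the `u × u` matrix
with columns `w^j - w^0`, `j = 1,…,u`, is unimodular (integral with determinant `±1`). -/
def IsUnimodularBin (u : ℕ) (B : Set (ℝ × (Fin u → ℝ))) : Prop :=
  IsBinPoly u u B ∧
  ∃ w : Fin (u + 1) → Fin u → ℝ,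
    (∀ j i, w j i = 0 ∨ w j i = 1) ∧
    B = convexHull ℝ {p : ℝ × (Fin u → ℝ) | ∃ j : Fin (u + 1), p = (((j : ℕ) : ℝ), w j)} ∧
    ∃ N : Matrix (Fin u) (Fin u) ℤ,
      (∀ i j : Fin u, (N i j : ℝ) = w j.succ i - w 0 i) ∧ (N.det = 1 ∨ N.det = -1)

/-- Let `q, u` be positive integers, `B ∈ Γ^u_u` unimodular and `C ∈ Γ^q_u`
arbitrary.  Then there exists an integral affine transformation `f : ℝ^u → ℝ^q`
(given by an integral matrix `V` and integral vector `v`) such that the map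
`g(x,z) = (x, f(z))` carries `B` into `C`: `g(B) ⊆ C`. -/
theorem stmt1 (u q : ℕ) (hu : 0 < u) (hq : 0 < q)
    (B : Set (ℝ × (Fin u → ℝ))) (C : Set (ℝ × (Fin q → ℝ)))
    (hB : IsUnimodularBin u B) (hC : IsBinPoly u q C) :
    ∃ (V : Matrix (Fin q) (Fin u) ℤ) (v : Fin q → ℤ),
      (fun p : ℝ × (Fin u → ℝ) =>
        (p.1, fun i : Fin q => (∑ j, (V i j : ℝ) * p.2 j) + (v i : ℝ))) '' B ⊆ C := by
  obtain ⟨hBpoly, w, hw01, hBhull, N, hN, hNdet⟩ := hB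
  obtain ⟨⟨Vfin, hVfin, hChull⟩, hCbox, hCproj⟩ := hC
  -- choose 0-1 points of C over each integer x = k
  have hz : ∀ k : Fin (u + 1), ∃ zk : Fin q → ℝ,
      ((((k : ℕ) : ℝ)), zk) ∈ C ∧ ∀ i, zk i = 0 ∨ zk i = 1 := by
    intro k
    have hk : (((k : ℕ)) : ℝ) ∈ Prod.fst '' (C ∩ {p | ∀ j, p.2 j = 0 ∨ p.2 j = 1}) := by
      rw [hCproj]; exact ⟨k, Nat.lt_succ_iff.mp k.isLt, rfl⟩
    obtain ⟨p, ⟨hpC, hp01⟩, hp1⟩ := hk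
    refine ⟨p.2, ?_, hp01⟩
    have : ((((k : ℕ)) : ℝ), p.2) = p := by rw [← hp1]
    rwa [this]
  choose z hzC hz01 using hz
  -- integer versions of w and z
  set Wz : Fin (u + 1) → Fin u → ℤ := fun k j => if w k j = 1 then 1 else 0 with hWz
  have hW : ∀ k j, ((Wz k j : ℤ) : ℝ) = w k j := by
    intro k j; rcases hw01 k j with h | h <;> simp [hWz, h]
  set Zz : Fin (u + 1) → Fin q → ℤ := fun k i => if z k i = 1 then 1 else 0 with hZz
  have hZ : ∀ k i, ((Zz k i : ℤ) : ℝ) = z k i := by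
    intro k i; rcases hz01 k i with h | h <;> simp [hZz, h]
  have hNint : ∀ j j', N j j' = Wz j'.succ j - Wz 0 j := by
    intro j j'
    have h : ((N j j' : ℤ) : ℝ) = ((Wz j'.succ j - Wz 0 j : ℤ) : ℝ) := by
      push_cast
      rw [hW, hW]; exact hN j j'
    exact_mod_cast h
  set M : Matrix (Fin q) (Fin u) ℤ := Matrix.of fun i j' => Zz j'.succ i - Zz 0 i with hM
  have hUnit : IsUnit N.det := by
    rcases hNdet with h | h
    · rw [h]; exact isUnit_one
    · rw [h]; exact isUnit_one.neg
  haveI := N.invertibleOfIsUnitDet hUnit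
  set V : Matrix (Fin q) (Fin u) ℤ := M * ⅟N with hV
  have hVNM : V * N = M := by
    rw [hV, Matrix.mul_assoc, invOf_mul_self, Matrix.mul_one]
  set v : Fin q → ℤ := fun i => Zz 0 i - ∑ j, V i j * Wz 0 j with hv
  -- key integer identity
  have key : ∀ (k : Fin (u + 1)) (i : Fin q), (∑ j, V i j * Wz k j) + v i = Zz k i := by
    intro k i
    induction k using Fin.cases with
    | zero => simp [hv]
    | succ j' =>
      have h1 : ∑ j, V i j * (Wz j'.succ j - Wz 0 j) = Zz j'.succ i - Zz 0 i := by
        calc ∑ j, V i j * (Wz j'.succ j - Wz 0 j) = ∑ j, V i j * N j j' := by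
              simp_rw [hNint]
          _ = (V * N) i j' := (Matrix.mul_apply).symm
          _ = M i j' := by rw [hVNM]
          _ = Zz j'.succ i - Zz 0 i := rfl
      have h2 : ∑ j, V i j * Wz j'.succ j - ∑ j, V i j * Wz 0 j = Zz j'.succ i - Zz 0 i := by
        rw [← Finset.sum_sub_distrib]
        simpa [mul_sub] using h1
      simp only [hv]
      linarith [h2]
  -- real version
  have hreal : ∀ (k : Fin (u + 1)) (i : Fin q),
      (∑ j, ((V i j : ℤ) : ℝ) * w k j) + ((v i : ℤ) : ℝ) = z k i := by
    intro k i
    have h := congrArg (fun t : ℤ => (t : ℝ)) (key k i)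
    push_cast at h
    simpa [hW, hZ] using h
  -- convexity of C
  have hCconv : Convex ℝ C := by rw [hChull]; exact convex_convexHull ℝ _
  -- the affine map
  set L : (ℝ × (Fin u → ℝ)) →ₗ[ℝ] (ℝ × (Fin q → ℝ)) :=
    (LinearMap.fst ℝ ℝ (Fin u → ℝ)).prod
      ((Matrix.mulVecLin (V.map (Int.cast : ℤ → ℝ))).comp (LinearMap.snd ℝ ℝ (Fin u → ℝ)))
    with hL
  set g : (ℝ × (Fin u → ℝ)) →ᵃ[ℝ] (ℝ × (Fin q → ℝ)) :=
    L.toAffineMap + AffineMap.const ℝ (ℝ × (Fin u → ℝ)) ((0 : ℝ), fun i => ((v i : ℤ) : ℝ))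
    with hg
  have hgeq : (fun p : ℝ × (Fin u → ℝ) =>
      (p.1, fun i : Fin q => (∑ j, ((V i j : ℤ) : ℝ) * p.2 j) + ((v i : ℤ) : ℝ))) = ⇑g := by
    funext p
    have hcoe : g p = L p + ((0 : ℝ), fun i => ((v i : ℤ) : ℝ)) := rfl
    rw [hcoe]
    refine Prod.ext (by simp [hL]) ?_
    funext i
    simp [hL, Matrix.mulVecLin_apply, Matrix.mulVec, dotProduct, Matrix.map_apply]
  refine ⟨V, v, ?_⟩
  rw [hgeq, hBhull, AffineMap.image_convexHull]
  refine convexHull_min ?_ hCconv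
  rintro _ ⟨p, ⟨k, rfl⟩, rfl⟩
  have hgp : g ((((k : ℕ)) : ℝ), w k) = ((((k : ℕ)) : ℝ), z k) := by
    rw [← congrFun hgeq ((((k : ℕ)) : ℝ), w k)]
    exact Prod.ext rfl (funext fun i => hreal k i)
  rw [hgp]
  exact hzC k
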